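/- arXiv:2605.28299 — 5 statements merged into one kernel-verified Lean document; each statement's English description precedes it below -/
import Mathlib

section
/- Let V be a set and N an open normal subgroup of the profinite group D_p^V. If π_v(N) ⊇ C_p for some v ∈ V, then (C_p)_v ⊆ N, where (C_p)_v denotes the subgroup of elements lying in C_p in the v coordinate and equal to the identity in all other coordinates. -/
open Function

noncomputable section

/-- A discrete group is a topological group. -/
instance (priority := 50) discreteTopologicalGroup (G : Type*) [Group G] [TopologicalSpace G]
    [DiscreteTopology G] : IsTopologicalGroup G where
  continuous_mul := continuous_of_discreteTopology
  continuous_inv := continuous_of_discreteTopology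

/-- The sign epimorphism `τ : D_p → C_2 = {±1}` killing the rotations. -/
def dihedralSign (p : ℕ) : DihedralGroup p →* ℤˣ where
  toFun x := match x with
    | DihedralGroup.r _ => 1
    | DihedralGroup.sr _ => -1
  map_one' := rfl
  map_mul' a b := by cases a <;> cases b <;> rfl

/-- `{±1}` acts on a commutative group by exponentiation (i.e. `-1` acts by inversion). -/
def unitsIntAut (A : Type*) [CommGroup A] : ℤˣ →* MulAut A where
  toFun u :=
    { toFun := fun x => x ^ (u : ℤ)
      invFun := fun x => x ^ (u : ℤ)
      left_inv := fun x => by rcases Int.units_eq_one_or u with h | h <;> simp [h]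
      right_inv := fun x => by rcases Int.units_eq_one_or u with h | h <;> simp [h]
      map_mul' := fun x y => mul_zpow x y _ }
  map_one' := by ext x; simp
  map_mul' u v := by
    ext x
    rcases Int.units_eq_one_or u with h | h <;>
      rcases Int.units_eq_one_or v with h' | h' <;>
        simp [h, h']

/-- The action of `D_p × D_p` on `C_q` given by `(x,y) · g = g^(τ(x)τ(y))`. -/
def Wact (p q : ℕ) : DihedralGroup p × DihedralGroup p →* MulAut (Multiplicative (ZMod q)) :=
  (unitsIntAut (Multiplicative (ZMod q))).comp
    (((dihedralSign p).comp (MonoidHom.fst _ _)) * ((dihedralSign p).comp (MonoidHom.snd _ _)))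

/-- The group `W = C_q ⋊ (D_p × D_p)`. -/
abbrev Wgrp (p q : ℕ) : Type :=
  SemidirectProduct (Multiplicative (ZMod q)) (DihedralGroup p × DihedralGroup p) (Wact p q)

/-- The quotient map `λ : W → D_p × D_p`. -/
abbrev lamW (p q : ℕ) : Wgrp p q →* DihedralGroup p × DihedralGroup p :=
  SemidirectProduct.rightHom

/-- The group `G_Γ ≤ D_p^V × W^R` associated to a graph `Γ = (V, R)`. -/
def GGamma (p q : ℕ) (V : Type*) (R : Set (V × V)) :
    Subgroup ((V → DihedralGroup p) × (R → Wgrp p q)) where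
  carrier := {x | ∀ r : R,
    SemidirectProduct.rightHom (x.2 r) = (x.1 (r : V × V).1, x.1 (r : V × V).2)}
  one_mem' := by intro r; simp <;> rfl
  mul_mem' := by
    intro a b ha hb r
    simp only [Set.mem_setOf_eq] at ha hb
    simp only [Prod.snd_mul, Pi.mul_apply, map_mul, Prod.fst_mul, ha r, hb r, Prod.mk_mul_mk]
  inv_mem' := by
    intro a ha r
    simp only [Set.mem_setOf_eq] at ha
    simp only [Prod.snd_inv, Pi.inv_apply, map_inv, Prod.fst_inv, ha r, Prod.inv_mk]

instance (n : ℕ) : TopologicalSpace (DihedralGroup n) := ⊥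
instance (n : ℕ) : DiscreteTopology (DihedralGroup n) := ⟨rfl⟩
instance (p q : ℕ) : TopologicalSpace (Wgrp p q) := ⊥
instance (p q : ℕ) : DiscreteTopology (Wgrp p q) := ⟨rfl⟩

variable (p q : ℕ) (V : Type*) (R : Set (V × V))

/-- The coordinate projection `π_v : G_Γ → D_p` at a vertex `v`. -/
def vProj (v : V) : ↥(GGamma p q V R) →* DihedralGroup p :=
  (Pi.evalMonoidHom (fun _ : V => DihedralGroup p) v).comp
    ((MonoidHom.fst _ _).comp (GGamma p q V R).subtype)

/-- The coordinate projection `π_r : G_Γ → W` at an edge `r`. -/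
def eProj (r : R) : ↥(GGamma p q V R) →* Wgrp p q :=
  (Pi.evalMonoidHom (fun _ : R => Wgrp p q) r).comp
    ((MonoidHom.snd _ _).comp (GGamma p q V R).subtype)

variable (I : Type*)

/-- The coordinate projection `π_v : G_Γ × C_2^I → D_p` at a vertex `v`. -/
def vProjK (v : V) : (↥(GGamma p q V R) × (I → ℤˣ)) →* DihedralGroup p :=
  (vProj p q V R v).comp (MonoidHom.fst _ _)

/-- The coordinate projection `π_r : G_Γ × C_2^I → W` at an edge `r`. -/
def eProjK (r : R) : (↥(GGamma p q V R) × (I → ℤˣ)) →* Wgrp p q :=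
  (eProj p q V R r).comp (MonoidHom.fst _ _)

/-- The map `ξ_Γ : G_Γ → C_2^V`, `((a_v), (b_r)) ↦ (τ(a_v))_v`. -/
def xiGamma : ↥(GGamma p q V R) →* (V → ℤˣ) :=
  Pi.monoidHom fun v => (dihedralSign p).comp (vProj p q V R v)

end

/-- Fix an odd prime `p`, and let `C_p = ker τ` be the rotation subgroup of
`D_p`.  Let `V` be a set and `N` an open normal subgroup of the profinite group `D_p^V`.
If `π_v(N) ⊇ C_p` for some `v ∈ V`, then `(C_p)_v ⊆ N`, where `(C_p)_v` is the subgroup of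
elements lying in `C_p` in the `v` coordinate and equal to the identity elsewhere. -/
theorem statement_6 (p : ℕ) (hp : p.Prime) (hodd : Odd p) (V : Type) [DecidableEq V]
    (N : Subgroup (V → DihedralGroup p)) [N.Normal]
    (hNo : IsOpen (N : Set (V → DihedralGroup p))) (v : V)
    (h : (dihedralSign p).ker ≤ N.map (Pi.evalMonoidHom (fun _ : V => DihedralGroup p) v)) :
    ((dihedralSign p).ker).map (MonoidHom.mulSingle (fun _ : V => DihedralGroup p) v) ≤ N := by
  haveI : Fact p.Prime := ⟨hp⟩
  rintro x ⟨g, hg, rfl⟩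
  obtain ⟨j, rfl⟩ : ∃ j, g = DihedralGroup.r j := by
    cases g with
    | r j => exact ⟨j, rfl⟩
    | sr j =>
      have hneg : (-1 : ℤˣ) = 1 := hg
      exact absurd hneg (by decide)
  have h2 : (2 : ZMod p) ≠ 0 := by
    intro h2
    have hdvd : p ∣ 2 := (ZMod.natCast_eq_zero_iff 2 p).mp (by exact_mod_cast h2)
    have := (Nat.prime_dvd_prime_iff_eq hp Nat.prime_two).mp hdvd
    rw [this] at hodd
    exact (Nat.not_odd_iff_even.mpr (even_two)) hodd
  set i : ZMod p := (2 : ZMod p)⁻¹ * j with hi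
  have h2i : i + i = j := by
    have : (2 : ZMod p) * i = j := by
      rw [hi, ← mul_assoc, mul_inv_cancel₀ h2, one_mul]
    rw [← this]; ring
  have hri : DihedralGroup.r i ∈ (dihedralSign p).ker := rfl
  obtain ⟨n, hnN, hnv⟩ := h hri
  set s : V → DihedralGroup p := Pi.mulSingle v (DihedralGroup.sr 0) with hs
  have key : n * (s * n⁻¹ * s⁻¹) ∈ N := by
    refine N.mul_mem hnN ?_
    simpa [mul_assoc] using
      Subgroup.Normal.conj_mem ‹N.Normal› n⁻¹ (N.inv_mem hnN) s
  have heq : (MonoidHom.mulSingle (fun _ : V => DihedralGroup p) v) (DihedralGroup.r j)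
      = n * (s * n⁻¹ * s⁻¹) := by
    funext w
    by_cases hw : w = v
    · subst hw
      have hnw : n w = DihedralGroup.r i := hnv
      simp only [MonoidHom.mulSingle_apply, Pi.mulSingle_eq_same, Pi.mul_apply, Pi.inv_apply,
        hs, hnw]
      rw [show ((DihedralGroup.r i : DihedralGroup p))⁻¹ = DihedralGroup.r (-i) from rfl,
        show ((DihedralGroup.sr 0 : DihedralGroup p))⁻¹ = DihedralGroup.sr 0 from rfl,
        DihedralGroup.sr_mul_r, DihedralGroup.sr_mul_sr, DihedralGroup.r_mul_r]
      congr 1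
      rw [← h2i]; ring
    · simp [MonoidHom.mulSingle_apply, Pi.mulSingle_eq_of_ne hw, hs]
  rw [heq]; exact key
end

section
/- Let Γ = (V,R) be a graph, I a set, and N an open normal subgroup of G_Γ × C_2^I. If π_v(N) ⊇ C_p for some v ∈ V, then (C_p)_v ⊆ N. -/
open Function

noncomputable section
variable (p q : ℕ) (V : Type*) (R : Set (V × V))

/-- The edge set of the induced subgraph on a set `V₀` of vertices. -/
def inducedR (V0 : Set V) : Set (↥V0 × ↥V0) := {e | ((e.1 : V), (e.2 : V)) ∈ R}

/-- The coordinate projection `π_{Γ₀} : G_Γ → G_{Γ₀}` onto the group of an induced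
subgraph. -/
def projGGamma (V0 : Set V) :
    ↥(GGamma p q V R) →* ↥(GGamma p q ↥V0 (inducedR V R V0)) :=
  MonoidHom.codRestrict
    ((MonoidHom.prod
      ((Pi.monoidHom fun v : ↥V0 =>
        Pi.evalMonoidHom (fun _ : V => DihedralGroup p) (v : V)).comp (MonoidHom.fst _ _))
      ((Pi.monoidHom fun e : inducedR V R V0 =>
        Pi.evalMonoidHom (fun _ : R => Wgrp p q)
          (⟨(((e : ↥V0 × ↥V0).1 : V), ((e : ↥V0 × ↥V0).2 : V)), e.2⟩ : R)).comp
        (MonoidHom.snd _ _))).comp (GGamma p q V R).subtype)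
    (GGamma p q ↥V0 (inducedR V R V0))
    (fun x => by
      intro e
      exact x.2 ⟨(((e : ↥V0 × ↥V0).1 : V), ((e : ↥V0 × ↥V0).2 : V)), e.2⟩)
end
noncomputable section
variable (p q : ℕ) (V : Type*) (R : Set (V × V))

/-- The edge component of the embedding `g ↦ (g)_v`. -/
def vertEmbW [DecidableEq V] (v : V) (r : V × V) : DihedralGroup p →* Wgrp p q :=
  SemidirectProduct.inr.comp
    (MonoidHom.prod (if r.1 = v then MonoidHom.id _ else 1) (if r.2 = v then MonoidHom.id _ else 1))

/-- The embedding `g ↦ (g)_v : D_p → G_Γ` associated to a vertex `v`. -/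
def vertEmb [DecidableEq V] (v : V) : DihedralGroup p →* ↥(GGamma p q V R) :=
  MonoidHom.codRestrict
    (MonoidHom.prod
      (Pi.monoidHom fun w : V => if w = v then MonoidHom.id (DihedralGroup p) else 1)
      (Pi.monoidHom fun r : R => vertEmbW p q V v (r : V × V)))
    (GGamma p q V R)
    (fun g => by
      intro r
      by_cases h1 : (r : V × V).1 = v <;> by_cases h2 : (r : V × V).2 = v <;>
        simp [vertEmbW, h1, h2, Pi.monoidHom]
      )

/-- The embedding `g ↦ (g)_v : D_p → G_Γ × C_2^I`. -/
def vertEmbK (I : Type*) [DecidableEq V] (v : V) :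
    DihedralGroup p →* (↥(GGamma p q V R) × (I → ℤˣ)) :=
  MonoidHom.prod (vertEmb p q V R v) 1

/-- The embedding `C_q → G_Γ` associated to an edge `r`. -/
def edgeEmb [DecidableEq V] (r : R) : Multiplicative (ZMod q) →* ↥(GGamma p q V R) :=
  MonoidHom.codRestrict
    (MonoidHom.prod (1 : Multiplicative (ZMod q) →* (V → DihedralGroup p))
      (Pi.monoidHom fun r' : R => if r' = r then SemidirectProduct.inl else 1))
    (GGamma p q V R)
    (fun a => by
      intro r'
      by_cases h : r' = r <;> simp [h, Pi.monoidHom] <;> rfl)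

/-- The embedding `C_q → G_Γ × C_2^I` associated to an edge `r`. -/
def edgeEmbK (I : Type*) [DecidableEq V] (r : R) :
    Multiplicative (ZMod q) →* (↥(GGamma p q V R) × (I → ℤˣ)) :=
  MonoidHom.prod (edgeEmb p q V R r) 1

/-- The embedding `C_q^R → G_Γ × C_2^I` of the product of all edge `C_q`'s. -/
def cqREmbK (I : Type*) : (R → Multiplicative (ZMod q)) →* (↥(GGamma p q V R) × (I → ℤˣ)) :=
  MonoidHom.prod
    (MonoidHom.codRestrict
      (MonoidHom.prod (1 : (R → Multiplicative (ZMod q)) →* (V → DihedralGroup p))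
        (Pi.monoidHom fun r : R =>
          SemidirectProduct.inl.comp (Pi.evalMonoidHom (fun _ : R => Multiplicative (ZMod q)) r)))
      (GGamma p q V R)
      (fun a => by intro r; simp [Pi.monoidHom] <;> rfl))
    1
end

lemma s7_inv_r {p : ℕ} (a : ZMod p) : (DihedralGroup.r a)⁻¹ = DihedralGroup.r (-a) := rfl
lemma s7_inv_sr {p : ℕ} (a : ZMod p) : (DihedralGroup.sr a)⁻¹ = DihedralGroup.sr a := rfl
lemma s7_sign_r {p : ℕ} (a : ZMod p) : dihedralSign p (DihedralGroup.r a) = 1 := rfl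
lemma s7_sign_sr {p : ℕ} (a : ZMod p) : dihedralSign p (DihedralGroup.sr a) = -1 := rfl

lemma s7_r_pow {p : ℕ} (a : ZMod p) (k : ℕ) :
    (DihedralGroup.r a) ^ k = DihedralGroup.r (a * (k : ZMod p)) := by
  induction k with
  | zero => simp [DihedralGroup.one_def, -DihedralGroup.r_zero]
  | succ k ih =>
    rw [pow_succ, ih, DihedralGroup.r_mul_r]
    congr 1
    push_cast
    ring_nf

lemma s7_wact_apply (p q : ℕ) (x y : DihedralGroup p) (d : Multiplicative (ZMod q)) :
    Wact p q (x, y) d = d ^ ((dihedralSign p x * dihedralSign p y : ℤˣ) : ℤ) := rfl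

lemma s7_wact_r_r (p q : ℕ) (a b : ZMod p) (d : Multiplicative (ZMod q)) :
    Wact p q (DihedralGroup.r a, DihedralGroup.r b) d = d := by
  rw [s7_wact_apply]
  show d ^ ((1 * 1 : ℤˣ) : ℤ) = d
  simp

lemma s7_w_pow (p q : ℕ) (c : Multiplicative (ZMod q)) (a b : ZMod p) (k : ℕ) :
    (⟨c, (DihedralGroup.r a, DihedralGroup.r b)⟩ : Wgrp p q) ^ k
      = ⟨c ^ k, (DihedralGroup.r (a * (k : ZMod p)), DihedralGroup.r (b * (k : ZMod p)))⟩ := by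
  induction k with
  | zero =>
    refine SemidirectProduct.ext ?_ ?_
    · simp
    · show (1 : DihedralGroup p × DihedralGroup p) = _
      simp only [Nat.cast_zero, mul_zero, Prod.ext_iff]
      exact ⟨rfl, rfl⟩
  | succ k ih =>
    rw [pow_succ, ih]
    refine SemidirectProduct.ext ?_ ?_
    · show c ^ k * Wact p q (DihedralGroup.r (a * (k : ZMod p)),
        DihedralGroup.r (b * (k : ZMod p))) c = c ^ (k + 1)
      rw [s7_wact_r_r, pow_succ]
    · show (DihedralGroup.r (a * (k : ZMod p)) * DihedralGroup.r a,
        DihedralGroup.r (b * (k : ZMod p)) * DihedralGroup.r b) = _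
      rw [DihedralGroup.r_mul_r, DihedralGroup.r_mul_r]
      refine Prod.ext (congrArg _ ?_) (congrArg _ ?_) <;> push_cast <;> ring_nf

lemma s7_cq_pow (q : ℕ) (c : Multiplicative (ZMod q)) : c ^ q = 1 := by
  have h : Multiplicative.toAdd (c ^ q) = Multiplicative.toAdd (1 : Multiplicative (ZMod q)) := by
    rw [toAdd_pow, toAdd_one, nsmul_eq_mul, ZMod.natCast_self, zero_mul]
  exact Multiplicative.toAdd.injective h

lemma s7_comm1 (p q : ℕ) (c : Multiplicative (ZMod q)) (i : ZMod p) (y : DihedralGroup p) :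
    (⟨1, (DihedralGroup.sr 0, 1)⟩ : Wgrp p q) * ⟨c, (DihedralGroup.r i, y)⟩ *
      (⟨1, (DihedralGroup.sr 0, 1)⟩ : Wgrp p q)⁻¹ * (⟨c, (DihedralGroup.r i, y)⟩ : Wgrp p q)⁻¹
      = ⟨(c * c)⁻¹, (DihedralGroup.r (-(i + i)), DihedralGroup.r 0)⟩ := by
  refine SemidirectProduct.ext ?_ ?_
  · set t := dihedralSign p y with ht
    simp only [SemidirectProduct.mul_left, SemidirectProduct.mul_right,
      SemidirectProduct.inv_left, SemidirectProduct.inv_right, Prod.inv_mk, Prod.mk_mul_mk,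
      s7_inv_sr, s7_inv_r, DihedralGroup.sr_mul_r, DihedralGroup.sr_mul_sr,
      DihedralGroup.r_mul_r, s7_wact_apply, map_inv, map_one, s7_sign_r, s7_sign_sr, ← ht,
      one_mul, mul_one]
    rcases Int.units_eq_one_or t with hy | hy <;> rw [hy] <;> norm_num <;>
      rw [← ht, hy] <;> norm_num
  · simp only [SemidirectProduct.mul_right, SemidirectProduct.inv_right, Prod.inv_mk,
      Prod.mk_mul_mk, s7_inv_sr, s7_inv_r, DihedralGroup.sr_mul_r, DihedralGroup.sr_mul_sr,
      DihedralGroup.r_mul_r, one_mul, mul_one, inv_one, mul_inv_cancel]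
    refine Prod.ext (congrArg DihedralGroup.r (by ring)) ?_
    simp [DihedralGroup.one_def, -DihedralGroup.r_zero]

lemma s7_comm2 (p q : ℕ) (c : Multiplicative (ZMod q)) (i : ZMod p) (y : DihedralGroup p) :
    (⟨1, (1, DihedralGroup.sr 0)⟩ : Wgrp p q) * ⟨c, (y, DihedralGroup.r i)⟩ *
      (⟨1, (1, DihedralGroup.sr 0)⟩ : Wgrp p q)⁻¹ * (⟨c, (y, DihedralGroup.r i)⟩ : Wgrp p q)⁻¹
      = ⟨(c * c)⁻¹, (DihedralGroup.r 0, DihedralGroup.r (-(i + i)))⟩ := by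
  refine SemidirectProduct.ext ?_ ?_
  · set t := dihedralSign p y with ht
    simp only [SemidirectProduct.mul_left, SemidirectProduct.mul_right,
      SemidirectProduct.inv_left, SemidirectProduct.inv_right, Prod.inv_mk, Prod.mk_mul_mk,
      s7_inv_sr, s7_inv_r, DihedralGroup.sr_mul_r, DihedralGroup.sr_mul_sr,
      DihedralGroup.r_mul_r, s7_wact_apply, map_inv, map_one, s7_sign_r, s7_sign_sr, ← ht,
      one_mul, mul_one]
    rcases Int.units_eq_one_or t with hy | hy <;> rw [hy] <;> norm_num <;>
      rw [← ht, hy] <;> norm_num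
  · simp only [SemidirectProduct.mul_right, SemidirectProduct.inv_right, Prod.inv_mk,
      Prod.mk_mul_mk, s7_inv_sr, s7_inv_r, DihedralGroup.sr_mul_r, DihedralGroup.sr_mul_sr,
      DihedralGroup.r_mul_r, one_mul, mul_one, inv_one, mul_inv_cancel]
    refine Prod.ext ?_ (congrArg DihedralGroup.r (by ring))
    simp [DihedralGroup.one_def, -DihedralGroup.r_zero]

section Statement7Aux2

variable (p q : ℕ) (V : Type) [DecidableEq V] (R : Set (V × V)) (I : Type)

lemma s7_vProjK_vertEmbK (v w : V) (g : DihedralGroup p) :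
    vProjK p q V R I w (vertEmbK p q V R I v g) = if w = v then g else 1 := by
  show (if w = v then MonoidHom.id (DihedralGroup p) else 1) g = _
  split_ifs <;> rfl

lemma s7_eProjK_vertEmbK (v : V) (e : R) (g : DihedralGroup p) :
    eProjK p q V R I e (vertEmbK p q V R I v g)
      = ⟨1, ((if (e : V × V).1 = v then g else 1), (if (e : V × V).2 = v then g else 1))⟩ := by
  show SemidirectProduct.inr
      ((if (e : V × V).1 = v then MonoidHom.id (DihedralGroup p) else 1) g,
       (if (e : V × V).2 = v then MonoidHom.id (DihedralGroup p) else 1) g) = _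
  split_ifs <;> rfl

lemma s7_snd_vertEmbK (v : V) (g : DihedralGroup p) :
    (vertEmbK p q V R I v g).2 = 1 := rfl

end Statement7Aux2


/-- Let `Γ = (V, R)` be a graph, `I` a set, and `N` an open normal subgroup
of `G_Γ × C_2^I`.  If `π_v(N) ⊇ C_p` for some vertex `v`, then `(C_p)_v ⊆ N`, where
`(C_p)_v` is the image of `C_p = ker τ` under the embedding `g ↦ (g)_v`. -/
theorem statement_7 (p q : ℕ) (hp : p.Prime) (hq : q.Prime) (hpo : Odd p) (hqo : Odd q)
    (hpq : p ≠ q) (V I : Type) [DecidableEq V] (R : Set (V × V))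
    (hloop : ∀ v : V, (v, v) ∉ R) (hor : ∀ a b : V, (a, b) ∈ R → (b, a) ∉ R)
    (N : Subgroup (↥(GGamma p q V R) × (I → ℤˣ))) [N.Normal]
    (hNo : IsOpen (N : Set (↥(GGamma p q V R) × (I → ℤˣ)))) (v : V)
    (h : (dihedralSign p).ker ≤ N.map (vProjK p q V R I v)) :
    ((dihedralSign p).ker).map (vertEmbK p q V R I v) ≤ N := by
  haveI : Fact (Nat.Prime p) := ⟨hp⟩
  intro x hx
  obtain ⟨g, hg, rfl⟩ := Subgroup.mem_map.mp hx
  obtain ⟨i, rfl⟩ : ∃ i, g = DihedralGroup.r i := by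
    cases g with
    | r i => exact ⟨i, rfl⟩
    | sr i =>
      exfalso
      have h1 : dihedralSign p (DihedralGroup.sr i) = 1 := hg
      rw [s7_sign_sr] at h1
      exact absurd h1 (by decide)
  obtain ⟨n, hnN, hn⟩ := Subgroup.mem_map.mp (h hg)
  set A : V → DihedralGroup p := (n.1 : (V → DihedralGroup p) × (R → Wgrp p q)).1 with hA
  set B : R → Wgrp p q := (n.1 : (V → DihedralGroup p) × (R → Wgrp p q)).2 with hB
  have hAv : A v = DihedralGroup.r i := hn
  have hcon : ∀ r : R, (B r).right = (A (r : V × V).1, A (r : V × V).2) := n.1.2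
  set b : ↥(GGamma p q V R) × (I → ℤˣ) := vertEmbK p q V R I v (DihedralGroup.sr 0) with hbdef
  set m : ↥(GGamma p q V R) × (I → ℤˣ) := b * n * b⁻¹ * n⁻¹ with hmdef
  have hmN : m ∈ N := mul_mem ((inferInstance : N.Normal).conj_mem n hnN b) (inv_mem hnN)
  -- the exponent k
  have hp2 : p ≠ 2 := by rintro rfl; revert hpo; decide
  have h2 : ((-2 : ZMod p)) ≠ 0 := by
    have h2' : ((2 : ℕ) : ZMod p) ≠ 0 := by
      rw [Ne, ZMod.natCast_eq_zero_iff]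
      exact fun hd => hp2 ((Nat.prime_dvd_prime_iff_eq hp Nat.prime_two).mp hd)
    intro hcontr
    exact h2' (by exact_mod_cast neg_eq_zero.mp hcontr)
  have hqne : ((q : ℕ) : ZMod p) ≠ 0 := by
    rw [Ne, ZMod.natCast_eq_zero_iff]
    exact fun hd => hpq ((Nat.prime_dvd_prime_iff_eq hp hq).mp hd)
  set k : ℕ := q * (((q : ZMod p))⁻¹ * (-2)⁻¹).val with hkdef
  have hck : ∀ c : Multiplicative (ZMod q), c ^ k = 1 := fun c => by
    rw [hkdef, pow_mul, s7_cq_pow, one_pow]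
  have hkp : ((k : ℕ) : ZMod p) * (-2) = 1 := by
    have hcast : ((k : ℕ) : ZMod p) = ((q : ZMod p))⁻¹ * (-2)⁻¹ * (q : ZMod p) := by
      rw [hkdef]
      push_cast
      rw [ZMod.natCast_val, ZMod.cast_id]
      ring
    rw [hcast]
    calc ((q : ZMod p))⁻¹ * (-2)⁻¹ * (q : ZMod p) * (-2)
        = ((q : ZMod p)⁻¹ * (q : ZMod p)) * ((-2 : ZMod p)⁻¹ * (-2)) := by ring
      _ = 1 := by rw [inv_mul_cancel₀ h2, inv_mul_cancel₀ hqne, one_mul]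
  have key : m ^ k = vertEmbK p q V R I v (DihedralGroup.r i) := by
    refine Prod.ext (Subtype.ext (Prod.ext (funext fun w => ?_) (funext fun e => ?_))) ?_
    · show vProjK p q V R I w (m ^ k)
        = vProjK p q V R I w (vertEmbK p q V R I v (DihedralGroup.r i))
      rw [map_pow, s7_vProjK_vertEmbK, hmdef]
      simp only [map_mul, map_inv]
      rw [hbdef, s7_vProjK_vertEmbK]
      have hnw : vProjK p q V R I w n = A w := rfl
      rw [hnw]
      by_cases hw : w = v
      · simp only [if_pos hw]
        subst hw
        rw [hAv, s7_inv_sr, s7_inv_r, DihedralGroup.sr_mul_r, DihedralGroup.sr_mul_sr,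
          DihedralGroup.r_mul_r, s7_r_pow]
        exact congrArg DihedralGroup.r (by linear_combination (i : ZMod p) * hkp)
      · simp only [if_neg hw]
        simp
    · show eProjK p q V R I e (m ^ k)
        = eProjK p q V R I e (vertEmbK p q V R I v (DihedralGroup.r i))
      rw [map_pow, s7_eProjK_vertEmbK, hmdef]
      simp only [map_mul, map_inv]
      rw [hbdef, s7_eProjK_vertEmbK]
      have hne : eProjK p q V R I e n = B e := rfl
      rw [hne]
      by_cases h1 : (e : V × V).1 = v <;> by_cases h2 : (e : V × V).2 = v
      · exfalso
        have hR := e.2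
        rw [show (e : V × V) = (v, v) from Prod.ext h1 h2] at hR
        exact hloop v hR
      · simp only [if_pos h1, if_neg h2]
        have hBe : B e = ⟨(B e).left, (DihedralGroup.r i, A (e : V × V).2)⟩ := by
          refine SemidirectProduct.ext rfl ?_
          rw [hcon e, h1, hAv]
        rw [hBe, s7_comm1, s7_w_pow, hck]
        refine SemidirectProduct.ext rfl (Prod.ext (congrArg DihedralGroup.r ?_) ?_)
        · linear_combination (i : ZMod p) * hkp
        · simp [DihedralGroup.one_def, -DihedralGroup.r_zero]
      · simp only [if_neg h1, if_pos h2]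
        have hBe : B e = ⟨(B e).left, (A (e : V × V).1, DihedralGroup.r i)⟩ := by
          refine SemidirectProduct.ext rfl ?_
          rw [hcon e, h2, hAv]
        rw [hBe, s7_comm2, s7_w_pow, hck]
        refine SemidirectProduct.ext rfl (Prod.ext ?_ (congrArg DihedralGroup.r ?_))
        · simp [DihedralGroup.one_def, -DihedralGroup.r_zero]
        · linear_combination (i : ZMod p) * hkp
      · simp only [if_neg h1, if_neg h2]
        have hone : (⟨1, (1, 1)⟩ : Wgrp p q) = 1 := rfl
        rw [hone]
        simp
    · show (m ^ k).2 = (vertEmbK p q V R I v (DihedralGroup.r i)).2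
      have hpow : (m ^ k).2 = m.2 ^ k := rfl
      rw [hpow, hmdef, s7_snd_vertEmbK]
      simp only [Prod.snd_mul, Prod.snd_inv]
      rw [hbdef, s7_snd_vertEmbK]
      simp
  have hfin : m ^ k ∈ N := pow_mem hmN k
  rwa [key] at hfin
end

section
/- Let Γ = (V,R) be a graph, I a set, and N an open normal subgroup of G_Γ × C_2^I. If C_q ⊆ π_r(N) for some r ∈ R, then (C_q)_r ⊆ N. -/
open Function

set_option linter.unusedSectionVars false
noncomputable section Aux

variable (p q : ℕ) (V : Type) [DecidableEq V] (R : Set (V × V)) (I : Type)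

lemma GG_ext {x y : ↥(GGamma p q V R) × (I → ℤˣ)}
    (h1 : ∀ w, vProjK p q V R I w x = vProjK p q V R I w y)
    (h2 : ∀ r' : R, eProjK p q V R I r' x = eProjK p q V R I r' y)
    (h3 : x.2 = y.2) : x = y := by
  obtain ⟨⟨⟨x1, x2⟩, hx⟩, x3⟩ := x
  obtain ⟨⟨⟨y1, y2⟩, hy⟩, y3⟩ := y
  simp only [Prod.mk.injEq, Subtype.mk.injEq]
  exact ⟨⟨funext h1, funext h2⟩, h3⟩

lemma vProjK_cq (f : R → Multiplicative (ZMod q)) (w : V) :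
    vProjK p q V R I w (cqREmbK p q V R I f) = 1 := rfl

lemma eProjK_cq (f : R → Multiplicative (ZMod q)) (r' : R) :
    eProjK p q V R I r' (cqREmbK p q V R I f) = SemidirectProduct.inl (f r') := rfl

lemma snd_cq (f : R → Multiplicative (ZMod q)) : (cqREmbK p q V R I f).2 = 1 := rfl

lemma vProjK_vert (g : DihedralGroup p) (w u : V) :
    vProjK p q V R I u (vertEmbK p q V R I w g) = if u = w then g else 1 := by
  show (if u = w then MonoidHom.id (DihedralGroup p) else 1) g = _
  split_ifs <;> rfl

lemma eProjK_vert (g : DihedralGroup p) (w : V) (r' : R) :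
    eProjK p q V R I r' (vertEmbK p q V R I w g) =
      SemidirectProduct.inr (if (r' : V × V).1 = w then g else 1,
        if (r' : V × V).2 = w then g else 1) := by
  show SemidirectProduct.inr
      ((if (r' : V × V).1 = w then MonoidHom.id (DihedralGroup p) else 1) g,
       (if (r' : V × V).2 = w then MonoidHom.id (DihedralGroup p) else 1) g) = _
  split_ifs <;> rfl

lemma snd_vert (g : DihedralGroup p) (w : V) : (vertEmbK p q V R I w g).2 = 1 := rfl

lemma vProjK_edge (a : Multiplicative (ZMod q)) (r : R) (w : V) :
    vProjK p q V R I w (edgeEmbK p q V R I r a) = 1 := rfl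

lemma eProjK_edge (a : Multiplicative (ZMod q)) (r r' : R) :
    eProjK p q V R I r' (edgeEmbK p q V R I r a) =
      if r' = r then SemidirectProduct.inl a else 1 := by
  show (if r' = r then (SemidirectProduct.inl :
      Multiplicative (ZMod q) →* Wgrp p q) else 1) a = _
  split_ifs <;> rfl

lemma snd_edge (a : Multiplicative (ZMod q)) (r : R) : (edgeEmbK p q V R I r a).2 = 1 := rfl

lemma Wact_apply' (x : DihedralGroup p × DihedralGroup p) (c : Multiplicative (ZMod q)) :
    Wact p q x c = c ^ (((dihedralSign p x.1 * dihedralSign p x.2 : ℤˣ) : ℤ)) := rfl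

lemma dhSign_sr0 : dihedralSign p (DihedralGroup.sr 0) = -1 := rfl

lemma dhSign_one : dihedralSign p 1 = 1 := rfl

/-- The sign by which conjugation by `(β)_w` acts on the `C_q` factor at edge `r'`. -/
def sgn (w : V) (r' : R) : ℤˣ :=
  (if (r' : V × V).1 = w then -1 else 1) * (if (r' : V × V).2 = w then -1 else 1)

lemma conj_cq (w : V) (f : R → Multiplicative (ZMod q)) :
    vertEmbK p q V R I w (DihedralGroup.sr 0) * cqREmbK p q V R I f *
      (vertEmbK p q V R I w (DihedralGroup.sr 0))⁻¹ =
    cqREmbK p q V R I (fun r' => f r' ^ ((sgn V R w r' : ℤˣ) : ℤ)) := by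
  apply GG_ext
  · intro u
    simp only [map_mul, map_inv, vProjK_vert, vProjK_cq]
    split_ifs <;> simp
  · intro r'
    simp only [map_mul, map_inv, eProjK_vert, eProjK_cq]
    rw [← map_inv, ← SemidirectProduct.inl_aut]
    rw [Wact_apply']
    simp only [sgn, apply_ite (dihedralSign p), dhSign_sr0, dhSign_one]
  · simp only [Prod.snd_mul, Prod.snd_inv, snd_vert, snd_cq]
    simp

lemma pow_eq_self (c : Multiplicative (ZMod q)) (m : ℕ) (hm : (m : ZMod q) = 1) :
    c ^ m = c := by
  have h : (c ^ m).toAdd = c.toAdd := by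
    rw [toAdd_pow, nsmul_eq_mul, hm, one_mul]
  exact Multiplicative.toAdd.injective h

lemma W_eq_inl (w : Wgrp p q) (hw : w.right = 1) : w = SemidirectProduct.inl w.left := by
  cases w with
  | mk l g =>
    cases hw
    rfl

end Aux

/-- Let `Γ = (V, R)` be a graph, `I` a set, and `N` an open normal subgroup
of `G_Γ × C_2^I`.  If `C_q ⊆ π_r(N)` for some edge `r` (with `C_q` viewed inside `W` as the
elements `(a,1,1)`), then `(C_q)_r ⊆ N`, where `(C_q)_r` is the image of `C_q` under the
embedding `g ↦ (g)_r`. -/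
theorem statement_8 (p q : ℕ) (hp : p.Prime) (hq : q.Prime) (hpo : Odd p) (hqo : Odd q)
    (hpq : p ≠ q) (V I : Type) [DecidableEq V] (R : Set (V × V))
    (hloop : ∀ v : V, (v, v) ∉ R) (hor : ∀ a b : V, (a, b) ∈ R → (b, a) ∉ R)
    (N : Subgroup (↥(GGamma p q V R) × (I → ℤˣ))) [N.Normal]
    (hNo : IsOpen (N : Set (↥(GGamma p q V R) × (I → ℤˣ)))) (r : R)
    (h : (SemidirectProduct.inl : Multiplicative (ZMod q) →* Wgrp p q).range ≤
      N.map (eProjK p q V R I r)) :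
    (edgeEmbK p q V R I r).range ≤ N := by
  haveI : NeZero p := ⟨hp.ne_zero⟩
  haveI : NeZero q := ⟨hq.ne_zero⟩
  haveI : Fact q.Prime := ⟨hq⟩
  have hN : N.Normal := inferInstance
  have hq2 : q ≠ 2 := by rintro rfl; simp [Nat.odd_iff] at hqo
  rintro x ⟨a, rfl⟩
  -- choose `b` with `b ^ 4 = a`
  have h4 : (4 : ZMod q) ≠ 0 := by
    have : ¬ ((4 : ℕ) : ZMod q) = 0 := by
      rw [ZMod.natCast_eq_zero_iff]
      intro hd
      have : q ∣ 2 * 2 := by simpa using hd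
      rcases hq.dvd_mul.mp this with h2 | h2 <;>
        exact hq2 ((Nat.prime_dvd_prime_iff_eq hq Nat.prime_two).mp h2)
    simpa using this
  set k : ℕ := ZMod.val ((4 : ZMod q)⁻¹) with hk
  have hk4 : ((k * 4 : ℕ) : ZMod q) = 1 := by
    push_cast
    rw [hk, ZMod.natCast_val, ZMod.cast_id]
    exact inv_mul_cancel₀ h4
  set b : Multiplicative (ZMod q) := a ^ k with hb
  have hba : b ^ 4 = a := by
    rw [hb, ← pow_mul]
    exact pow_eq_self q a (k * 4) hk4
  -- get `n ∈ N` with `π_r n = inl b`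
  obtain ⟨n, hnN, hn⟩ : ∃ n ∈ N, eProjK p q V R I r n = SemidirectProduct.inl b := by
    have := h (MonoidHom.mem_range.mpr ⟨b, rfl⟩)
    rwa [Subgroup.mem_map] at this
  -- choose `e ≡ 0 (mod 2p)`, `e ≡ 1 (mod q)`
  have hco : Nat.Coprime (2 * p) q := by
    refine Nat.Coprime.mul ?_ ((Nat.coprime_primes hp hq).mpr hpq)
    exact (Nat.coprime_primes Nat.prime_two hq).mpr (Ne.symm hq2)
  obtain ⟨e, he0, he1⟩ := Nat.chineseRemainder hco 0 1
  have hedvd : 2 * p ∣ e := Nat.modEq_zero_iff_dvd.mp he0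
  have heq : ((e : ℕ) : ZMod q) = 1 := by
    have := (ZMod.natCast_eq_natCast_iff e 1 q).mpr he1
    simpa using this
  obtain ⟨t, ht⟩ := hedvd
  -- `m = n ^ e` lies in the product of the edge `C_q`'s
  set m := n ^ (e : ℕ) with hmdef
  have hmN : m ∈ N := pow_mem hnN _
  have hv : ∀ w, vProjK p q V R I w m = 1 := by
    intro w
    rw [hmdef, map_pow, ht, pow_mul, ← DihedralGroup.card (n := p),
      pow_card_eq_one, one_pow]
  have hm2 : m.2 = 1 := by
    obtain ⟨t2, ht2⟩ : 2 ∣ (e : ℕ) := dvd_trans ⟨p, rfl⟩ ⟨t, ht⟩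
    funext i
    rw [hmdef, Prod.pow_snd, Pi.pow_apply, ht2, pow_mul, Int.units_sq, one_pow]
    rfl
  set f : R → Multiplicative (ZMod q) := fun r' => (eProjK p q V R I r' m).left with hf
  have hmem : ∀ r'' : R, SemidirectProduct.rightHom ((m.1 : (V → DihedralGroup p) ×
      (R → Wgrp p q)).2 r'') = ((m.1 : (V → DihedralGroup p) × (R → Wgrp p q)).1 (r'' : V × V).1,
      (m.1 : (V → DihedralGroup p) × (R → Wgrp p q)).1 (r'' : V × V).2) := m.1.2
  have hm : m = cqREmbK p q V R I f := by
    apply GG_ext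
    · intro w; rw [hv w, vProjK_cq]
    · intro r'
      rw [eProjK_cq]
      refine W_eq_inl p q _ ?_
      have := hmem r'
      rw [SemidirectProduct.rightHom_eq_right] at this
      have h1 : (m.1 : (V → DihedralGroup p) × (R → Wgrp p q)).1 (r' : V × V).1 = 1 :=
        hv (r' : V × V).1
      have h2 : (m.1 : (V → DihedralGroup p) × (R → Wgrp p q)).1 (r' : V × V).2 = 1 :=
        hv (r' : V × V).2
      show ((m.1 : (V → DihedralGroup p) × (R → Wgrp p q)).2 r').right = 1
      rw [this, h1, h2]
      rfl
    · rw [hm2, snd_cq]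
  have hfr : f r = b := by
    have he : eProjK p q V R I r m = SemidirectProduct.inl b := by
      rw [hmdef, map_pow, hn, ← map_pow, pow_eq_self q b e heq]
    rw [hf]
    simp only [he, SemidirectProduct.left_inl]
  -- conjugations
  set rv : V := (r : V × V).1 with hrv
  set rv' : V := (r : V × V).2 with hrv'
  have hrpair : (r : V × V) = (rv, rv') := rfl
  have hvv : rv ≠ rv' := by
    intro hh
    exact hloop rv (by rw [← hh] at hrpair; exact hrpair ▸ r.2)
  set gv := vertEmbK p q V R I rv (DihedralGroup.sr 0) with hgv
  set gv' := vertEmbK p q V R I rv' (DihedralGroup.sr 0) with hgv'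
  set f1 : R → Multiplicative (ZMod q) :=
    fun r' => f r' * (f r')⁻¹ ^ ((sgn V R rv r' : ℤˣ) : ℤ) with hf1
  set f2 : R → Multiplicative (ZMod q) :=
    fun r' => f1 r' * (f1 r')⁻¹ ^ ((sgn V R rv' r' : ℤˣ) : ℤ) with hf2
  set z := m * (gv * m⁻¹ * gv⁻¹) with hz
  have hzN : z ∈ N := N.mul_mem hmN (hN.conj_mem _ (N.inv_mem hmN) gv)
  have hzeq : z = cqREmbK p q V R I f1 := by
    rw [hz, hm, ← map_inv, hgv, conj_cq, ← map_mul]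
    congr 1
  set z' := z * (gv' * z⁻¹ * gv'⁻¹) with hz'
  have hz'N : z' ∈ N := N.mul_mem hzN (hN.conj_mem _ (N.inv_mem hzN) gv')
  have hz'eq : z' = cqREmbK p q V R I f2 := by
    rw [hz', hzeq, ← map_inv, hgv', conj_cq, ← map_mul]
    congr 1
  -- identify z' with the edge embedding of a
  have key : edgeEmbK p q V R I r a = z' := by
    rw [hz'eq]
    apply GG_ext
    · intro w; rw [vProjK_edge, vProjK_cq]
    · intro r''
      rw [eProjK_edge, eProjK_cq]
      by_cases hr : r'' = r
      · subst hr
        rw [if_pos rfl]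
        congr 1
        have hs1 : sgn V R rv r'' = -1 := by
          rw [sgn, if_pos rfl, if_neg (by rw [hrpair]; exact Ne.symm hvv), mul_one]
        have hs2 : sgn V R rv' r'' = -1 := by
          rw [sgn, if_neg (by rw [hrpair]; exact hvv), if_pos rfl, one_mul]
        simp only [hf2, hf1, hs1, hs2, hfr, Units.val_neg, Units.val_one, zpow_neg,
          zpow_one, inv_inv, ← hba]
        rw [pow_succ, pow_succ, pow_succ, pow_one, mul_assoc (b * b)]
      · rw [if_neg hr]
        have : f2 r'' = 1 := by
          by_cases hA : (r'' : V × V).1 = rv <;> by_cases hB : (r'' : V × V).2 = rv <;>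
            by_cases hC : (r'' : V × V).1 = rv' <;> by_cases hD : (r'' : V × V).2 = rv'
          all_goals first
          | exact absurd (hA.symm.trans hC) hvv
          | exact absurd (hB.symm.trans hD) hvv
          | exact absurd (Subtype.ext (show (r'' : V × V) = (r : V × V) by
              rw [hrpair]; exact Prod.ext hA hD)) hr
          | exact absurd (show ((rv', rv) : V × V) ∈ R from by
              rw [← hC, ← hB]; exact r''.2) (hor rv rv' (hrpair ▸ r.2))
          | (simp only [hf2, hf1, sgn, hA, hB, hC, hD, if_true, if_false, if_neg hvv,
               if_neg (Ne.symm hvv)]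
             try norm_num
             try group)
        rw [this, map_one]
    · rw [snd_edge, snd_cq]
  rw [key]
  exact hz'N
end

section
/- Let Γ be a graph, I a set, and G̃ the universal Frattini cover of G_Γ × C_2^I. Let S_pq = S_p·S_q denote the product of the p-Sylow and q-Sylow subgroups of G̃ (both of which are closed and normal in G̃). Then for all closed normal subgroups M and N of G̃: S_pq·M ∩ S_pq·N = S_pq·(M ∩ N). More generally, this identity holds in any profinite group whose p-Sylow subgroup and q-Sylow subgroup are both closed and normal. -/
open Function

open Function

noncomputable section

/-- The Frattini subgroup of a topological group: the intersection of all maximal open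
subgroups. -/
def frattiniOpen (G : Type*) [Group G] [TopologicalSpace G] : Subgroup G :=
  ⨅ M ∈ {M : Subgroup G | IsOpen (M : Set G) ∧ IsCoatom M}, M

/-- A Frattini cover: a continuous epimorphism whose kernel is contained in the Frattini
subgroup of the source. -/
def IsFrattiniCover {H G : Type*} [Group H] [TopologicalSpace H] [Group G] [TopologicalSpace G]
    (φ : H →* G) : Prop :=
  Continuous φ ∧ Surjective φ ∧ φ.ker ≤ frattiniOpen H

/-- A universal Frattini cover: a Frattini cover through which every Frattini cover by a
profinite group factors via a continuous epimorphism. -/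
def IsUniversalFrattiniCover {tG G : Type*} [Group tG] [TopologicalSpace tG] [Group G]
    [TopologicalSpace G] (φt : tG →* G) : Prop :=
  IsFrattiniCover φt ∧
    ∀ (H : Type) [Group H] [TopologicalSpace H] [IsTopologicalGroup H] [CompactSpace H]
      [T2Space H] [TotallyDisconnectedSpace H] (β : H →* G), IsFrattiniCover β →
        ∃ γ : tG →* H, Continuous γ ∧ Surjective γ ∧ β.comp γ = φt

/-- A topological group is pro-`ℓ` if each of its continuous finite quotients is an
`ℓ`-group. -/
def IsProL (ℓ : ℕ) (H : Type*) [Group H] [TopologicalSpace H] : Prop :=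
  ∀ (Q : Type) [Group Q] [Finite Q] (φ : H →* Q),
    Surjective φ → IsOpen (φ.ker : Set H) → IsPGroup ℓ Q

end

section Statement17Aux

open Subgroup
open scoped Pointwise

/-- Extraction of the `p`-part of an element of finite order: there is a power `g ^ s`
which is a `p`-element and has the same image as `g` under any homomorphism sending `g`
to a `p`-element. -/
lemma pPartCore {p : ℕ} (hp : p.Prime) {G : Type*} [Group G] (g : G) (hg : 0 < orderOf g) :
    ∃ s : ℕ, (g ^ s) ^ p ^ ((orderOf g).factorization p) = 1 ∧
      ∀ {G' : Type*} [Group G'] (f : G →* G') (k : ℕ), (f g) ^ p ^ k = 1 → f (g ^ s) = f g := by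
  have hn0 : orderOf g ≠ 0 := hg.ne'
  set n := orderOf g with hn
  set i := n.factorization p with hi
  set m := n / p ^ i with hm
  have hcop : Nat.Coprime p m := Nat.coprime_ordCompl hp hn0
  have hsplit : p ^ i * m = n := Nat.ordProj_mul_ordCompl_eq_self n p
  have htot : (p ^ i).totient ≠ 0 := (Nat.totient_pos.mpr (pow_pos hp.pos i)).ne'
  refine ⟨m ^ (p ^ i).totient, ?_, ?_⟩
  · have hdvd : n ∣ m ^ (p ^ i).totient * p ^ i := by
      rw [← hsplit, mul_comm (p ^ i) m]
      exact mul_dvd_mul_right (dvd_pow_self m htot) _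
    rw [← pow_mul]
    exact orderOf_dvd_iff_pow_eq_one.mp (hn ▸ hdvd)
  · intro G' _ f k hk
    have h1 : orderOf (f g) ∣ p ^ k := orderOf_dvd_of_pow_eq_one hk
    obtain ⟨j, hjk, hj⟩ := (Nat.dvd_prime_pow hp).mp h1
    have h2 : orderOf (f g) ∣ n := orderOf_map_dvd f g
    have h3 : p ^ j ∣ p ^ i := by
      have h2' : p ^ j ∣ p ^ i * m := by rw [hsplit]; exact hj ▸ h2
      exact (Nat.Coprime.pow_left j hcop).dvd_of_dvd_mul_right h2'
    have h4 : m ^ (p ^ i).totient ≡ 1 [MOD p ^ i] :=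
      Nat.ModEq.pow_totient (Nat.Coprime.pow_right _ hcop.symm)
    have h5 : m ^ (p ^ i).totient ≡ 1 [MOD orderOf (f g)] := by
      rw [hj]; exact h4.of_dvd h3
    rw [map_pow]
    conv_rhs => rw [← pow_one (f g)]
    exact pow_eq_pow_iff_modEq.mpr h5

/-- The key finite-group lemma: if `P` is a normal `p`-subgroup containing all
`p`-elements, `Q` is a normal `q`-subgroup containing all `q`-elements, and `M`, `N`
are normal, then membership of `x` in both `P ⊔ Q ⊔ M` and `P ⊔ Q ⊔ N` forces
membership in `P ⊔ Q ⊔ (M ⊓ N)`. -/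
lemma finKey {p q : ℕ} (hp : p.Prime) (hq : q.Prime) (hpq : p ≠ q)
    {Gb : Type*} [Group Gb] [Finite Gb] (P Q M N : Subgroup Gb)
    [P.Normal] [Q.Normal] [M.Normal] [N.Normal]
    (hPp : IsPGroup p P) (hQq : IsPGroup q Q)
    (hP : ∀ g : Gb, (∃ k, g ^ p ^ k = 1) → g ∈ P)
    (hQ : ∀ g : Gb, (∃ k, g ^ q ^ k = 1) → g ∈ Q)
    {x : Gb} (hxM : x ∈ P ⊔ Q ⊔ M) (hxN : x ∈ P ⊔ Q ⊔ N) :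
    x ∈ P ⊔ Q ⊔ (M ⊓ N) := by
  haveI : Fact p.Prime := ⟨hp⟩
  haveI : Fact q.Prime := ⟨hq⟩
  -- write x = s * m with s ∈ P ⊔ Q, m ∈ M
  have hx' : x ∈ ((P ⊔ Q : Subgroup Gb) : Set Gb) * (M : Set Gb) := by
    rw [← Subgroup.mul_normal]; exact hxM
  obtain ⟨s, hs, m, hm, hx⟩ := hx'
  have hmN : m ∈ P ⊔ Q ⊔ N := by
    have hs' : s ∈ P ⊔ Q := hs
    have h1 : s⁻¹ * x ∈ P ⊔ Q ⊔ N := mul_mem (inv_mem (Subgroup.mem_sup_left hs')) hxN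
    rwa [← hx, inv_mul_cancel_left] at h1
  -- quotient by N to find the exponent of m modulo M ⊓ N
  set μ := QuotientGroup.mk' N with hμ
  have hμm : μ m ∈ map μ P ⊔ map μ Q := by
    have h1 : μ m ∈ map μ (P ⊔ Q ⊔ N) := mem_map_of_mem μ hmN
    have hN : map μ N = ⊥ := by
      refine (Subgroup.eq_bot_iff_forall _).mpr ?_
      rintro y ⟨n', hn', rfl⟩
      exact (QuotientGroup.eq_one_iff n').mpr hn'
    rwa [Subgroup.map_sup, Subgroup.map_sup, hN, sup_bot_eq] at h1
  haveI hPμ : (map μ P).Normal := Subgroup.Normal.map ‹_› μ (QuotientGroup.mk'_surjective N)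
  haveI hQμ : (map μ Q).Normal := Subgroup.Normal.map ‹_› μ (QuotientGroup.mk'_surjective N)
  have hdis : Disjoint (map μ P) (map μ Q) :=
    IsPGroup.disjoint_of_ne p q hpq _ _ (hPp.map μ) (hQq.map μ)
  have hμm' : μ m ∈ (↑(map μ P) * ↑(map μ Q) : Set (Gb ⧸ N)) := by
    rw [← Subgroup.mul_normal]; exact hμm
  obtain ⟨ub, hu, vb, hv, huv⟩ := hμm'
  obtain ⟨e, he⟩ := (hPp.map μ) ⟨ub, hu⟩
  have he' : ub ^ p ^ e = 1 := by
    have := congrArg (Subtype.val) he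
    simpa using this
  obtain ⟨f, hf⟩ := (hQq.map μ) ⟨vb, hv⟩
  have hf' : vb ^ q ^ f = 1 := by
    have := congrArg (Subtype.val) hf
    simpa using this
  have hcomm : Commute ub vb :=
    Subgroup.commute_of_normal_of_disjoint _ _ hPμ hQμ hdis _ _ hu hv
  have hE : (μ m) ^ (p ^ e * q ^ f) = 1 := by
    rw [← huv]
    calc (ub * vb) ^ (p ^ e * q ^ f)
        = ub ^ (p ^ e * q ^ f) * vb ^ (p ^ e * q ^ f) := hcomm.mul_pow _
      _ = 1 := by
          rw [pow_mul, he', one_pow, mul_comm (p ^ e), pow_mul, hf', one_pow, one_mul]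
  have hmEK : m ^ (p ^ e * q ^ f) ∈ M ⊓ N := by
    refine ⟨pow_mem hm _, ?_⟩
    have : μ (m ^ (p ^ e * q ^ f)) = 1 := by rw [map_pow]; exact hE
    exact (QuotientGroup.eq_one_iff _).mp this
  -- now work modulo K = M ⊓ N
  set ρ := QuotientGroup.mk' (M ⊓ N) with hρ
  have hρE : (ρ m) ^ (p ^ e * q ^ f) = 1 := by
    rw [← map_pow]
    exact (QuotientGroup.eq_one_iff _).mpr hmEK
  set n := orderOf (ρ m) with hndef
  have hn0 : n ≠ 0 := (orderOf_pos _).ne'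
  set i := n.factorization p with hidef
  set m' := n / p ^ i with hm'def
  have hcop : Nat.Coprime p m' := Nat.coprime_ordCompl hp hn0
  have hsplit : p ^ i * m' = n := Nat.ordProj_mul_ordCompl_eq_self n p
  have hndvd : n ∣ p ^ e * q ^ f := orderOf_dvd_of_pow_eq_one hρE
  have hm'q : m' ∣ q ^ f := by
    have h1 : m' ∣ p ^ e * q ^ f := dvd_trans (by rw [← hsplit]; exact dvd_mul_left _ _) hndvd
    exact (hcop.symm.pow_right e).dvd_of_dvd_mul_left h1
  have htot : (p ^ i).totient ≠ 0 := (Nat.totient_pos.mpr (pow_pos hp.pos i)).ne'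
  set s₁ := m' ^ (p ^ i).totient with hs₁def
  have hm's : m' ∣ s₁ := dvd_pow_self m' htot
  have hs₁mod : s₁ ≡ 1 [MOD p ^ i] := Nat.ModEq.pow_totient (hcop.symm.pow_right i)
  -- b = (ρ m) ^ s₁ is a p-element
  have hbp : ((ρ m) ^ s₁) ^ p ^ i = 1 := by
    rw [← pow_mul, ← orderOf_dvd_iff_pow_eq_one, ← hndef, ← hsplit, mul_comm (p ^ i) m']
    exact mul_dvd_mul_right hm's _
  -- c = (ρ m) ^ u is a q-element, where u = s₁ * (n - 1) + 1
  set u := s₁ * (n - 1) + 1 with hudef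
  have hnn : n - 1 + 1 = n := Nat.succ_pred_eq_of_pos (Nat.pos_of_ne_zero hn0)
  have hpu : p ^ i ∣ u := by
    have h1 : u ≡ 1 * (n - 1) + 1 [MOD p ^ i] := (hs₁mod.mul_right (n - 1)).add_right 1
    have h2 : u ≡ 0 [MOD p ^ i] := by
      refine h1.trans ?_
      rw [one_mul, hnn]
      exact (Nat.modEq_zero_iff_dvd).mpr (by rw [← hsplit]; exact dvd_mul_right _ _)
    exact (Nat.modEq_zero_iff_dvd).mp h2
  have hcq : ((ρ m) ^ u) ^ q ^ f = 1 := by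
    rw [← pow_mul, ← orderOf_dvd_iff_pow_eq_one, ← hndef, ← hsplit]
    exact (Nat.Coprime.pow_left i hcop).mul_dvd_of_dvd_of_dvd
      (dvd_mul_of_dvd_left hpu _) (dvd_mul_of_dvd_right hm'q _)
  have hsu : s₁ + u = s₁ * n + 1 := by
    rw [hudef]
    conv_rhs => rw [← hnn]
    rw [Nat.mul_succ]
    omega
  have hρm : (ρ m) ^ s₁ * (ρ m) ^ u = ρ m := by
    rw [← pow_add, hsu, pow_succ, mul_comm s₁ n, pow_mul, pow_orderOf_eq_one, one_pow, one_mul]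
  -- b lies in the image of P
  have hbP : (ρ m) ^ s₁ ∈ map ρ P := by
    obtain ⟨s₂, hs₂1, hs₂2⟩ := pPartCore hp (m ^ s₁) (orderOf_pos _)
    have hb_eq : ρ (m ^ s₁) = (ρ m) ^ s₁ := map_pow ρ m s₁
    have hlift : ρ ((m ^ s₁) ^ s₂) = ρ (m ^ s₁) := by
      refine hs₂2 ρ i ?_
      rw [hb_eq]; exact hbp
    exact ⟨(m ^ s₁) ^ s₂, hP _ ⟨_, hs₂1⟩, by rw [hlift, hb_eq]⟩
  -- c lies in the image of Q
  have hcQ : (ρ m) ^ u ∈ map ρ Q := by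
    obtain ⟨s₃, hs₃1, hs₃2⟩ := pPartCore hq (m ^ u) (orderOf_pos _)
    have hc_eq : ρ (m ^ u) = (ρ m) ^ u := map_pow ρ m u
    have hlift : ρ ((m ^ u) ^ s₃) = ρ (m ^ u) := by
      refine hs₃2 ρ f ?_
      rw [hc_eq]; exact hcq
    exact ⟨(m ^ u) ^ s₃, hQ _ ⟨_, hs₃1⟩, by rw [hlift, hc_eq]⟩
  have hρmem : ρ m ∈ map ρ (P ⊔ Q) := by
    rw [Subgroup.map_sup]
    exact hρm ▸ Subgroup.mul_mem_sup hbP hcQ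
  have hmfin : m ∈ P ⊔ Q ⊔ (M ⊓ N) := by
    have h4 : m ∈ comap ρ (map ρ (P ⊔ Q)) := hρmem
    rwa [Subgroup.comap_map_eq, QuotientGroup.ker_mk'] at h4
  rw [← hx]
  have hs' : s ∈ P ⊔ Q := hs
  exact mul_mem (Subgroup.mem_sup_left hs') hmfin

end Statement17Aux

section Statement17Profinite

open Subgroup
open scoped Pointwise

/-- The type of open normal subgroups of a topological group, bundled as a subtype. -/
def ONS (G : Type*) [Group G] [TopologicalSpace G] : Type _ :=
  {U : Subgroup G // IsOpen (U : Set G) ∧ U.Normal}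

instance (G : Type*) [Group G] [TopologicalSpace G] : Nonempty (ONS G) :=
  ⟨⟨⊤, by rw [Subgroup.coe_top]; exact isOpen_univ, inferInstance⟩⟩

/-- The intersection of two open normal subgroups, as an open normal subgroup. -/
def ONS.inf {G : Type*} [Group G] [TopologicalSpace G] (U V : ONS G) : ONS G :=
  ⟨U.1 ⊓ V.1, by rw [Subgroup.coe_inf]; exact U.2.1.inter V.2.1,
    by haveI := U.2.2; haveI := V.2.2; exact Subgroup.normal_inf_normal _ _⟩

variable {G : Type} [Group G] [TopologicalSpace G] [IsTopologicalGroup G] [CompactSpace G]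

lemma isClosed_preimage_mk' (U : Subgroup G) [U.Normal] (hU : IsOpen (U : Set G))
    (s : Set (G ⧸ U)) : IsClosed ((QuotientGroup.mk' U) ⁻¹' s) := by
  haveI := QuotientGroup.discreteTopology (N := U) hU
  exact (isClosed_discrete s).preimage continuous_quotient_mk'

variable [T2Space G] [TotallyDisconnectedSpace G]

lemma ons_exists {O : Set G} (hO : IsOpen O) (h1 : (1 : G) ∈ O) :
    ∃ U : ONS G, (U.1 : Set G) ⊆ O := by
  obtain ⟨W, hW, h1W, hWO⟩ := compact_exists_isClopen_in_isOpen hO h1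
  obtain ⟨H, hH⟩ := IsTopologicalGroup.exist_openNormalSubgroup_sub_clopen_nhds_of_one hW h1W
  exact ⟨⟨H.toSubgroup, H.toOpenSubgroup.isOpen, H.isNormal'⟩, fun g hg => hWO (hH hg)⟩

lemma ons_eq_one {g : G} (h : ∀ U : ONS G, g ∈ U.1) : g = 1 := by
  by_contra hg
  obtain ⟨U, hU⟩ := ons_exists (isOpen_compl_singleton : IsOpen ({g}ᶜ : Set G))
    (by simpa using Ne.symm hg)
  exact (hU (h U)) rfl

/-- Every closed normal subgroup is the intersection of its open "thickenings". -/
lemma mem_of_forall_mem_sup (M : Subgroup G) (hM : IsClosed (M : Set G)) (c : G)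
    (h : ∀ U : ONS G, c ∈ M ⊔ U.1) : c ∈ M := by
  let F : ONS G → Set G := fun U => (M : Set G) ∩ {g | c⁻¹ * g ∈ U.1}
  have hFc : ∀ U, IsClosed (F U) := by
    intro U
    refine hM.inter ?_
    have : {g | c⁻¹ * g ∈ U.1} = (fun g => c⁻¹ * g) ⁻¹' (U.1 : Set G) := rfl
    rw [this]
    exact (Subgroup.isClosed_of_isOpen U.1 U.2.1).preimage (continuous_const.mul continuous_id)
  have hFne : ∀ U, (F U).Nonempty := by
    intro U
    haveI := U.2.2
    have h2 : c ∈ (M : Set G) * (U.1 : Set G) := by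
      rw [← Subgroup.mul_normal]; exact h U
    obtain ⟨m, hm, u, hu, hmu⟩ := h2
    refine ⟨m, hm, ?_⟩
    have h3 : c⁻¹ * m = u⁻¹ := by rw [← hmu]; group
    show c⁻¹ * m ∈ U.1
    rw [h3]; exact inv_mem hu
  have hdir : Directed (· ⊇ ·) F := by
    intro U V
    refine ⟨ONS.inf U V, fun g hg => ⟨hg.1, hg.2.1⟩, fun g hg => ⟨hg.1, hg.2.2⟩⟩
  obtain ⟨m₀, hm₀⟩ := IsCompact.nonempty_iInter_of_directed_nonempty_isCompact_isClosed
    F hdir hFne (fun U => (hFc U).isCompact) hFc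
  simp only [Set.mem_iInter] at hm₀
  have h1 : c⁻¹ * m₀ = 1 := ons_eq_one (fun U => (hm₀ U).2)
  have h2 : c = m₀ := by
    have := inv_mul_eq_one.mp h1
    exact this
  rw [h2]; exact (hm₀ (Classical.arbitrary _)).1

/-- The image of a closed subgroup that is pro-`p` in a finite quotient is a `p`-group. -/
lemma isPGroup_map_of_isProL {p : ℕ} (Sp : Subgroup G) (hSp : IsProL p ↥Sp)
    (U : Subgroup G) [U.Normal] (hU : IsOpen (U : Set G)) :
    IsPGroup p (Subgroup.map (QuotientGroup.mk' U) Sp) := by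
  haveI : Finite (G ⧸ U) := Subgroup.quotient_finite_of_isOpen U hU
  set ψ := (QuotientGroup.mk' U).comp Sp.subtype with hψ
  have hker : IsOpen (ψ.ker : Set ↥Sp) := by
    have he : (ψ.ker : Set ↥Sp) = Subtype.val ⁻¹' (U : Set G) := by
      ext s
      simp [hψ, MonoidHom.mem_ker, QuotientGroup.eq_one_iff]
    rw [he]
    exact hU.preimage continuous_subtype_val
  have h := hSp ↥ψ.range ψ.rangeRestrict ψ.rangeRestrict_surjective
    (by rw [MonoidHom.ker_rangeRestrict]; exact hker)
  have heq : ψ.range = Subgroup.map (QuotientGroup.mk' U) Sp := by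
    rw [hψ, MonoidHom.range_comp, Subgroup.range_subtype]
  exact heq ▸ h

/-- Lifting of `p`-elements: any `p`-element of a finite quotient of a profinite group
is the image of an element of a closed pro-`p` subgroup, hence lies in the image of the
normal `p`-Sylow subgroup. -/
lemma mem_map_sylow_of_pPow {p : ℕ} (hp : p.Prime) (Sp : Subgroup G)
    (hSpmax : ∀ K : Subgroup G, IsClosed (K : Set G) → IsProL p ↥K → K ≤ Sp)
    (U : Subgroup G) [U.Normal] (hU : IsOpen (U : Set G))
    (xb : G ⧸ U) (k : ℕ) (hx : xb ^ p ^ k = 1) :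
    xb ∈ Subgroup.map (QuotientGroup.mk' U) Sp := by
  -- a directed family of closed sets witnessing compatible `p`-power lifts
  let F : ONS G → Set G := fun W =>
    {a | QuotientGroup.mk' U a = xb} ∩ {a | ∃ j : ℕ, a ^ p ^ j ∈ W.1}
  have hFc : ∀ W, IsClosed (F W) := by
    intro W
    haveI := W.2.2
    refine IsClosed.inter ?_ ?_
    · have : {a | QuotientGroup.mk' U a = xb} = (QuotientGroup.mk' U) ⁻¹' {xb} := rfl
      rw [this]; exact isClosed_preimage_mk' U hU _
    · have he : {a | ∃ j : ℕ, a ^ p ^ j ∈ W.1} =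
          (QuotientGroup.mk' W.1) ⁻¹' {g : G ⧸ W.1 | ∃ j : ℕ, g ^ p ^ j = 1} := by
        ext a
        simp only [Set.mem_setOf_eq, Set.mem_preimage, ← map_pow]
        constructor
        · rintro ⟨j, hj⟩; exact ⟨j, (QuotientGroup.eq_one_iff _).mpr hj⟩
        · rintro ⟨j, hj⟩; exact ⟨j, (QuotientGroup.eq_one_iff _).mp hj⟩
      rw [he]; exact isClosed_preimage_mk' W.1 W.2.1 _
  have hFne : ∀ W, (F W).Nonempty := by
    intro W
    haveI := W.2.2
    set W' : Subgroup G := U ⊓ W.1 with hW'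
    haveI : W'.Normal := Subgroup.normal_inf_normal U W.1
    have hW'o : IsOpen (W' : Set G) := by
      rw [hW', Subgroup.coe_inf]; exact hU.inter W.2.1
    haveI : Finite (G ⧸ W') := Subgroup.quotient_finite_of_isOpen W' hW'o
    obtain ⟨x, hxx⟩ := QuotientGroup.mk'_surjective U xb
    obtain ⟨s, hs1, hs2⟩ := pPartCore hp (QuotientGroup.mk' W' x) (orderOf_pos _)
    have hle : W' ≤ Subgroup.comap (MonoidHom.id G) U := by
      exact fun a ha => ha.1
    set f : (G ⧸ W') →* (G ⧸ U) := QuotientGroup.map W' U (MonoidHom.id G) hle with hf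
    have hfmk : ∀ a : G, f (QuotientGroup.mk' W' a) = QuotientGroup.mk' U a := fun a => rfl
    refine ⟨x ^ s, ?_, ?_⟩
    · show QuotientGroup.mk' U (x ^ s) = xb
      have h2 : f ((QuotientGroup.mk' W' x) ^ s) = f (QuotientGroup.mk' W' x) := by
        refine hs2 f k ?_
        rw [hfmk, hxx]; exact hx
      calc QuotientGroup.mk' U (x ^ s) = f (QuotientGroup.mk' W' (x ^ s)) := (hfmk _).symm
        _ = f ((QuotientGroup.mk' W' x) ^ s) := by rw [map_pow]
        _ = f (QuotientGroup.mk' W' x) := h2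
        _ = QuotientGroup.mk' U x := hfmk x
        _ = xb := hxx
    · refine ⟨(orderOf (QuotientGroup.mk' W' x)).factorization p, ?_⟩
      have h3 : QuotientGroup.mk' W' ((x ^ s) ^ p ^ (orderOf (QuotientGroup.mk' W' x)).factorization p) = 1 := by
        rw [map_pow, map_pow]; exact hs1
      have h4 := (QuotientGroup.eq_one_iff _).mp h3
      exact (inf_le_right : W' ≤ W.1) h4
  have hdir : Directed (· ⊇ ·) F := by
    intro W₁ W₂
    refine ⟨ONS.inf W₁ W₂, ?_, ?_⟩
    · rintro a ⟨h1, j, h2⟩; exact ⟨h1, j, h2.1⟩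
    · rintro a ⟨h1, j, h2⟩; exact ⟨h1, j, h2.2⟩
  obtain ⟨y, hy⟩ := IsCompact.nonempty_iInter_of_directed_nonempty_isCompact_isClosed
    F hdir hFne (fun W => (hFc W).isCompact) hFc
  simp only [Set.mem_iInter] at hy
  have hyU : QuotientGroup.mk' U y = xb := (hy (Classical.arbitrary _)).1
  -- the closed subgroup generated by y is pro-p
  set C := (Subgroup.zpowers y).topologicalClosure with hC
  have hCc : IsClosed (C : Set G) := Subgroup.isClosed_topologicalClosure _
  have hCpro : IsProL p ↥C := by
    intro Q _ _ φ hsurj hker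
    obtain ⟨O, hOopen, hOeq⟩ := isOpen_induced_iff.mp hker
    have h1O : (1 : G) ∈ O := by
      have h1k : (1 : ↥C) ∈ (φ.ker : Set ↥C) := one_mem _
      rw [← hOeq] at h1k
      simpa using h1k
    obtain ⟨W, hW⟩ := ons_exists hOopen h1O
    haveI := W.2.2
    obtain ⟨j, hj⟩ := (hy W).2
    -- every element of C is p-power torsion modulo W
    have hCW : ∀ c : G, c ∈ C → c ^ p ^ j ∈ W.1 := by
      have hle : C ≤ Subgroup.comap (QuotientGroup.mk' W.1)
          (Subgroup.zpowers (QuotientGroup.mk' W.1 y)) := by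
        apply Subgroup.topologicalClosure_minimal
        · exact Subgroup.zpowers_le.mpr (Subgroup.mem_comap.mpr (Subgroup.mem_zpowers _))
        · have hc : (Subgroup.comap (QuotientGroup.mk' W.1)
              (Subgroup.zpowers (QuotientGroup.mk' W.1 y)) : Set G)
              = (QuotientGroup.mk' W.1) ⁻¹'
                ((Subgroup.zpowers (QuotientGroup.mk' W.1 y) : Subgroup (G ⧸ W.1)) : Set (G ⧸ W.1)) :=
            Subgroup.coe_comap _ _
          rw [hc]
          exact isClosed_preimage_mk' W.1 W.2.1 _
      intro c hc
      obtain ⟨z, hz⟩ := Subgroup.mem_zpowers_iff.mp (Subgroup.mem_comap.mp (hle hc))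
      have hyW : (QuotientGroup.mk' W.1 y) ^ (p ^ j : ℕ) = 1 := by
        rw [← map_pow]; exact (QuotientGroup.eq_one_iff _).mpr hj
      have hcW : (QuotientGroup.mk' W.1 c) ^ (p ^ j : ℕ) = 1 := by
        rw [← hz, ← zpow_natCast, ← zpow_mul, mul_comm, zpow_mul, zpow_natCast, hyW, one_zpow]
      rw [← map_pow] at hcW
      exact (QuotientGroup.eq_one_iff _).mp hcW
    intro qel
    obtain ⟨c, rfl⟩ := hsurj qel
    refine ⟨j, ?_⟩
    have h2 : (c : G) ^ p ^ j ∈ W.1 := hCW _ c.2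
    have h3 : c ^ p ^ j ∈ φ.ker := by
      have h4 : ((c ^ p ^ j : ↥C) : G) ∈ O := hW (by simpa using h2)
      have h5 : (c ^ p ^ j : ↥C) ∈ Subtype.val ⁻¹' O := h4
      rw [hOeq] at h5
      exact h5
    rw [← map_pow]
    exact MonoidHom.mem_ker.mp h3
  have hCSp : C ≤ Sp := hSpmax C hCc hCpro
  exact ⟨y, hCSp (Subgroup.le_topologicalClosure _ (Subgroup.mem_zpowers y)), hyU⟩

end Statement17Profinite

open scoped Pointwise in
/-- Let `Γ` be a graph, `I` a set, and `G̃` the universal Frattini cover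
of `G_Γ × C_2^I`.  Let `S_pq = S_p·S_q` (the join) of the `p`-Sylow and `q`-Sylow subgroups
of `G̃`, both closed and normal.  Then for all closed normal subgroups `M`, `N` of `G̃`:
`S_pq·M ∩ S_pq·N = S_pq·(M ∩ N)`. -/
theorem statement_17 (p q : ℕ) (hp : p.Prime) (hq : q.Prime) (hpo : Odd p) (hqo : Odd q)
    (hpq : p ≠ q) (V I : Type) (R : Set (V × V))
    (hloop : ∀ v : V, (v, v) ∉ R) (hor : ∀ a b : V, (a, b) ∈ R → (b, a) ∉ R)
    (tG : Type) [Group tG] [TopologicalSpace tG] [IsTopologicalGroup tG] [CompactSpace tG]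
    [T2Space tG] [TotallyDisconnectedSpace tG]
    (φt : tG →* (↥(GGamma p q V R) × (I → ℤˣ))) (huniv : IsUniversalFrattiniCover φt)
    (Sp Sq : Subgroup tG) [Sp.Normal] [Sq.Normal]
    (hSpc : IsClosed (Sp : Set tG)) (hSqc : IsClosed (Sq : Set tG))
    (hSppro : IsProL p ↥Sp) (hSqpro : IsProL q ↥Sq)
    (hSpmax : ∀ K : Subgroup tG, IsClosed (K : Set tG) → IsProL p ↥K → K ≤ Sp)
    (hSqmax : ∀ K : Subgroup tG, IsClosed (K : Set tG) → IsProL q ↥K → K ≤ Sq)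
    (M N : Subgroup tG) [M.Normal] [N.Normal]
    (hMc : IsClosed (M : Set tG)) (hNc : IsClosed (N : Set tG)) :
    ((Sp ⊔ Sq) ⊔ M) ⊓ ((Sp ⊔ Sq) ⊔ N) = (Sp ⊔ Sq) ⊔ (M ⊓ N) := by
  refine le_antisymm ?_ (le_inf (sup_le_sup_left inf_le_left _) (sup_le_sup_left inf_le_right _))
  intro x hx
  obtain ⟨hx1, hx2⟩ := Subgroup.mem_inf.mp hx
  classical
  let F : ONS tG → Set tG := fun U =>
    {c | c ∈ M ⊔ U.1 ∧ c ∈ N ⊔ U.1 ∧ ∃ s ∈ Sp ⊔ Sq, s * c = x}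
  have hSc : IsCompact ((Sp ⊔ Sq : Subgroup tG) : Set tG) := by
    rw [Subgroup.mul_normal Sp Sq]
    exact hSpc.isCompact.mul hSqc.isCompact
  have hFc : ∀ U, IsClosed (F U) := by
    intro U
    haveI := U.2.2
    have e1 : F U = (((M ⊔ U.1 : Subgroup tG) : Set tG) ∩ ((N ⊔ U.1 : Subgroup tG) : Set tG))
        ∩ ((fun s => s⁻¹ * x) '' ((Sp ⊔ Sq : Subgroup tG) : Set tG)) := by
      ext c
      constructor
      · rintro ⟨h1, h2, s, hs, hsx⟩
        exact ⟨⟨h1, h2⟩, s, hs, by rw [← hsx]; group⟩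
      · rintro ⟨⟨h1, h2⟩, s, hs, rfl⟩
        exact ⟨h1, h2, s, hs, by group⟩
    rw [e1]
    have hMo : IsClosed ((M ⊔ U.1 : Subgroup tG) : Set tG) := by
      refine Subgroup.isClosed_of_isOpen _ ?_
      rw [Subgroup.mul_normal M U.1]
      exact IsOpen.mul_left U.2.1
    have hNo : IsClosed ((N ⊔ U.1 : Subgroup tG) : Set tG) := by
      refine Subgroup.isClosed_of_isOpen _ ?_
      rw [Subgroup.mul_normal N U.1]
      exact IsOpen.mul_left U.2.1
    refine (hMo.inter hNo).inter ?_
    exact (hSc.image (continuous_inv.mul continuous_const)).isClosed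
  have hFne : ∀ U, (F U).Nonempty := by
    intro U
    haveI hUn := U.2.2
    have hUo := U.2.1
    set π := QuotientGroup.mk' U.1 with hπ
    haveI : Finite (tG ⧸ U.1) := Subgroup.quotient_finite_of_isOpen U.1 hUo
    haveI hPn : (Subgroup.map π Sp).Normal :=
      Subgroup.Normal.map ‹_› π (QuotientGroup.mk'_surjective U.1)
    haveI hQn : (Subgroup.map π Sq).Normal :=
      Subgroup.Normal.map ‹_› π (QuotientGroup.mk'_surjective U.1)
    haveI hMn : (Subgroup.map π M).Normal :=
      Subgroup.Normal.map ‹_› π (QuotientGroup.mk'_surjective U.1)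
    haveI hNn : (Subgroup.map π N).Normal :=
      Subgroup.Normal.map ‹_› π (QuotientGroup.mk'_surjective U.1)
    have h1 : π x ∈ Subgroup.map π Sp ⊔ Subgroup.map π Sq ⊔ Subgroup.map π M := by
      have h := Subgroup.mem_map_of_mem π hx1
      rwa [Subgroup.map_sup, Subgroup.map_sup] at h
    have h2 : π x ∈ Subgroup.map π Sp ⊔ Subgroup.map π Sq ⊔ Subgroup.map π N := by
      have h := Subgroup.mem_map_of_mem π hx2
      rwa [Subgroup.map_sup, Subgroup.map_sup] at h
    have key := finKey hp hq hpq (Subgroup.map π Sp) (Subgroup.map π Sq)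
      (Subgroup.map π M) (Subgroup.map π N)
      (isPGroup_map_of_isProL Sp hSppro U.1 hUo)
      (isPGroup_map_of_isProL Sq hSqpro U.1 hUo)
      (fun g hg => by
        obtain ⟨k, hk⟩ := hg
        exact mem_map_sylow_of_pPow hp Sp hSpmax U.1 hUo g k hk)
      (fun g hg => by
        obtain ⟨k, hk⟩ := hg
        exact mem_map_sylow_of_pPow hq Sq hSqmax U.1 hUo g k hk)
      h1 h2
    rw [← Subgroup.map_sup] at key
    have key2 : π x ∈ ((Subgroup.map π (Sp ⊔ Sq) : Subgroup (tG ⧸ U.1)) : Set (tG ⧸ U.1)) *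
        ((Subgroup.map π M ⊓ Subgroup.map π N : Subgroup (tG ⧸ U.1)) : Set (tG ⧸ U.1)) := by
      rw [← Subgroup.mul_normal]
      exact key
    obtain ⟨sb, hsb, db, hdb, hsd⟩ := key2
    obtain ⟨s, hs, hsπ⟩ := hsb
    have hπc : π (s⁻¹ * x) = db := by
      rw [map_mul, map_inv, hsπ, ← hsd]
      group
    refine ⟨s⁻¹ * x, ?_, ?_, s, hs, by group⟩
    · have hmem : s⁻¹ * x ∈ Subgroup.comap π (Subgroup.map π M) :=
        Subgroup.mem_comap.mpr (by rw [hπc]; exact hdb.1)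
      rwa [Subgroup.comap_map_eq, QuotientGroup.ker_mk'] at hmem
    · have hmem : s⁻¹ * x ∈ Subgroup.comap π (Subgroup.map π N) :=
        Subgroup.mem_comap.mpr (by rw [hπc]; exact hdb.2)
      rwa [Subgroup.comap_map_eq, QuotientGroup.ker_mk'] at hmem
  have hdir : Directed (· ⊇ ·) F := by
    intro U V
    refine ⟨ONS.inf U V, ?_, ?_⟩
    · rintro c ⟨h1, h2, h3⟩
      exact ⟨sup_le_sup_left inf_le_left M h1, sup_le_sup_left inf_le_left N h2, h3⟩
    · rintro c ⟨h1, h2, h3⟩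
      exact ⟨sup_le_sup_left inf_le_right M h1, sup_le_sup_left inf_le_right N h2, h3⟩
  obtain ⟨c, hc⟩ := IsCompact.nonempty_iInter_of_directed_nonempty_isCompact_isClosed
    F hdir hFne (fun U => (hFc U).isCompact) hFc
  simp only [Set.mem_iInter] at hc
  have hcM : c ∈ M := mem_of_forall_mem_sup M hMc c (fun U => (hc U).1)
  have hcN : c ∈ N := mem_of_forall_mem_sup N hNc c (fun U => (hc U).2.1)
  obtain ⟨s, hs, hsx⟩ := (hc (Classical.arbitrary _)).2.2
  exact hsx ▸ Subgroup.mul_mem_sup hs (⟨hcM, hcN⟩ : c ∈ M ⊓ N)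
end

section
/- Let Γ = (V,R) be a graph. (i) For all finite subsets U, U' ⊆ V, the following product identity holds in G_Γ: (⋂_{v∈U} ker(π_v))·(⋂_{v∈U'} ker(π_v)) = ⋂_{v∈U∩U'} ker(π_v). (ii) Consequently, if N is an open normal subgroup of G_Γ with G_Γ/N ≅ C_2 and n is minimal such that ⋂_{v∈U} ker(π_v) ⊆ N for some n-element subset U ⊆ V, then this n-element set U is unique: if U and U' are two n-element subsets of V with ⋂_{v∈U} ker(π_v) ⊆ N and ⋂_{v∈U'} ker(π_v) ⊆ N, then U = U'. -/
open Function

open Pointwise in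
theorem aux_prod_19 (p q : ℕ) (V : Type) [DecidableEq V] (R : Set (V × V))
    (U U' : Finset V) :
    ((↑(⨅ v ∈ U, (vProj p q V R v).ker) : Set ↥(GGamma p q V R)) *
        (↑(⨅ v ∈ U', (vProj p q V R v).ker) : Set ↥(GGamma p q V R))) =
      (↑(⨅ v ∈ U ∩ U', (vProj p q V R v).ker) : Set ↥(GGamma p q V R)) := by
  ext g
  simp only [Set.mem_mul, SetLike.mem_coe, Subgroup.mem_iInf, MonoidHom.mem_ker]
  constructor
  · rintro ⟨a, ha, b, hb, rfl⟩
    intro v hv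
    rw [Finset.mem_inter] at hv
    rw [map_mul, ha v hv.1, hb v hv.2, one_mul]
  · intro hg
    set a1 : V → DihedralGroup p := fun v => if v ∈ U then 1 else (g : (V → DihedralGroup p) × (R → Wgrp p q)).1 v with ha1
    have hmem : ((a1, fun r : R => SemidirectProduct.inr (a1 (r : V × V).1, a1 (r : V × V).2)) :
        (V → DihedralGroup p) × (R → Wgrp p q)) ∈ GGamma p q V R := by
      intro r
      exact SemidirectProduct.rightHom_inr _
    set a : ↥(GGamma p q V R) := ⟨_, hmem⟩ with haa
    refine ⟨a, ?_, a⁻¹ * g, ?_, mul_inv_cancel_left a g⟩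
    · intro v hv
      show a1 v = 1
      simp [ha1, hv]
    · intro v hv
      rw [map_mul, map_inv]
      show (a1 v)⁻¹ * (g : (V → DihedralGroup p) × (R → Wgrp p q)).1 v = 1
      by_cases h : v ∈ U
      · have := hg v (Finset.mem_inter.mpr ⟨h, hv⟩)
        simp [ha1, h]
        exact this
      · simp [ha1, h]

open Pointwise in
/-- Let `Γ = (V, R)` be a graph.
(i) For all finite `U, U' ⊆ V`, in `G_Γ` one has the product identity
`(⋂_{v∈U} ker π_v)·(⋂_{v∈U'} ker π_v) = ⋂_{v∈U∩U'} ker π_v`.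
(ii) Consequently, if `N` is open normal with `G_Γ/N ≅ C_2` and `n` is minimal such that
`⋂_{v∈U} ker π_v ⊆ N` for some `n`-element `U ⊆ V`, then the `n`-element set `U` is
unique. -/
theorem statement_19 (p q : ℕ) (hp : p.Prime) (hq : q.Prime) (hpo : Odd p) (hqo : Odd q)
    (hpq : p ≠ q) (V : Type) [DecidableEq V] (R : Set (V × V))
    (hloop : ∀ v : V, (v, v) ∉ R) (hor : ∀ a b : V, (a, b) ∈ R → (b, a) ∉ R) :
    (∀ U U' : Finset V,
      ((↑(⨅ v ∈ U, (vProj p q V R v).ker) : Set ↥(GGamma p q V R)) *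
          (↑(⨅ v ∈ U', (vProj p q V R v).ker) : Set ↥(GGamma p q V R))) =
        (↑(⨅ v ∈ U ∩ U', (vProj p q V R v).ker) : Set ↥(GGamma p q V R))) ∧
    ∀ (N : Subgroup ↥(GGamma p q V R)), N.Normal →
      IsOpen (N : Set ↥(GGamma p q V R)) →
      (∃ ψ : ↥(GGamma p q V R) →* ℤˣ, Function.Surjective ψ ∧ ψ.ker = N) →
      ∀ (n : ℕ) (U U' : Finset V), U.card = n → U'.card = n →
        (⨅ v ∈ U, (vProj p q V R v).ker) ≤ N →
        (⨅ v ∈ U', (vProj p q V R v).ker) ≤ N →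
        (∀ (m : ℕ) (U'' : Finset V), U''.card = m →
          (⨅ v ∈ U'', (vProj p q V R v).ker) ≤ N → n ≤ m) →
        U = U' := by
  refine ⟨fun U U' => aux_prod_19 p q V R U U', ?_⟩
  intro N _ _ _ n U U' hU hU' hUN hU'N hmin
  have hsub : (⨅ v ∈ U ∩ U', (vProj p q V R v).ker) ≤ N := by
    intro x hx
    have hx' : x ∈ ((↑(⨅ v ∈ U, (vProj p q V R v).ker) : Set ↥(GGamma p q V R)) *
        (↑(⨅ v ∈ U', (vProj p q V R v).ker) : Set ↥(GGamma p q V R))) := by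
      rw [aux_prod_19]; exact hx
    rcases hx' with ⟨a, ha, b, hb, rfl⟩
    exact N.mul_mem (hUN ha) (hU'N hb)
  have hcard : n ≤ (U ∩ U').card := hmin _ _ rfl hsub
  have h1 : U ∩ U' = U :=
    Finset.eq_of_subset_of_card_le Finset.inter_subset_left (by omega)
  have h2 : U ∩ U' = U' :=
    Finset.eq_of_subset_of_card_le Finset.inter_subset_right (by omega)
  rw [← h1, h2]
end
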